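/- Let J ≥ 2, Δx > 0, Δt > 0, 0 < γ < 2, χ ∈ ℝ, z ∈ ℝ. Let d : {0,…,J-1} → ℝ (half-grid diffusion values D_{j+1/2}), D : {0,…,J} → ℝ (grid diffusion values), φ : {-1,…,J+1} → ℝ, and c, C : {0,…,J} → ℝ (where C denotes c^{n+γ} and c denotes c^n). Suppose: (i) for every interior index 1 ≤ j ≤ J-1, (C_j - c_j)/(γΔt) = [ d_j (C_{j+1} + c_{j+1}) - (d_j + d_{j-1})(C_j + c_j) + d_{j-1}(C_{j-1} + c_{j-1}) ] / (2(Δx)²) + χ z [ D_{j+1}(C_{j+1} + c_{j+1})(φ_{j+2} - φ_j) - D_{j-1}(C_{j-1} + c_{j-1})(φ_j - φ_{j-2}) ] / (8(Δx)²); (ii) at the left boundary, (C_0 - c_0)/(γΔt) = d_0 (C_1 - C_0 + c_1 - c_0)/(Δx)² + χ z [ D_0 (C_0 + c_0)(φ_1 - φ_{-1}) + D_1 (C_1 + c_1)(φ_2 - φ_0) ] / (4(Δx)²); (iii) at the right boundary, (C_J - c_J)/(γΔt) = - d_{J-1} (C_J - C_{J-1} + c_J - c_{J-1})/(Δx)²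 - χ z [ D_{J-1}(C_{J-1} + c_{J-1})(φ_J - φ_{J-2}) + D_J (C_J + c_J)(φ_{J+1} - φ_{J-1}) ] / (4(Δx)²). Then the discrete trapezoidal totals agree exactly: Δx ( C_0/2 + Σ_{j=1}^{J-1} C_j + C_J/2 ) = Δx ( c_0/2 + Σ_{j=1}^{J-1} c_j + c_J/2 ). -/

import Mathlib

/-- Exact mass conservation of the TR (trapezoidal) step of the mass-conservative
TR-BDF2 scheme for the 1D Nernst–Planck equation. Here `c` denotes the grid values
cⁿ, `C` denotes c^{n+γ}, `d j` plays the role of D_{j+1/2}, `D` the grid diffusion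
values, and `φ : ℤ → ℝ` the level-n potential including the ghost values φ₋₁, φ_{J+1}. -/
theorem tr_step_mass_conservation
    (J : ℕ) (hJ : 2 ≤ J) (Δx Δt γ χ z : ℝ)
    (hΔx : 0 < Δx) (hΔt : 0 < Δt) (hγ0 : 0 < γ) (hγ2 : γ < 2)
    (d D c C : ℕ → ℝ) (φ : ℤ → ℝ)
    (hint : ∀ j, 1 ≤ j → j < J →
      (C j - c j) / (γ * Δt)
        = (d j * (C (j + 1) + c (j + 1)) - (d j + d (j - 1)) * (C j + c j)
            + d (j - 1) * (C (j - 1) + c (j - 1))) / (2 * Δx ^ 2)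
          + χ * z * (D (j + 1) * (C (j + 1) + c (j + 1)) * (φ ((j : ℤ) + 2) - φ (j : ℤ))
              - D (j - 1) * (C (j - 1) + c (j - 1)) * (φ (j : ℤ) - φ ((j : ℤ) - 2)))
            / (8 * Δx ^ 2))
    (hleft :
      (C 0 - c 0) / (γ * Δt)
        = d 0 * (C 1 - C 0 + c 1 - c 0) / Δx ^ 2
          + χ * z * (D 0 * (C 0 + c 0) * (φ 1 - φ (-1))
              + D 1 * (C 1 + c 1) * (φ 2 - φ 0)) / (4 * Δx ^ 2))
    (hright :
      (C J - c J) / (γ * Δt)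
        = -(d (J - 1) * (C J - C (J - 1) + c J - c (J - 1))) / Δx ^ 2
          - χ * z * (D (J - 1) * (C (J - 1) + c (J - 1)) * (φ (J : ℤ) - φ ((J : ℤ) - 2))
              + D J * (C J + c J) * (φ ((J : ℤ) + 1) - φ ((J : ℤ) - 1))) / (4 * Δx ^ 2)) :
    Δx * (C 0 / 2 + ∑ j ∈ Finset.Ico 1 J, C j + C J / 2)
      = Δx * (c 0 / 2 + ∑ j ∈ Finset.Ico 1 J, c j + c J / 2) := by
  have hx : Δx ≠ 0 := ne_of_gt hΔx
  have hgt : γ * Δt ≠ 0 := by positivity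
  -- the discrete flux
  set S : ℕ → ℝ := fun j => C j + c j with hS
  set A : ℕ → ℝ := fun j => D j * S j * (φ ((j : ℤ) + 1) - φ ((j : ℤ) - 1)) with hA
  set G : ℕ → ℝ := fun j =>
    γ * Δt * (d j * (S (j + 1) - S j) / (2 * Δx ^ 2)
      + χ * z * (A (j + 1) + A j) / (8 * Δx ^ 2)) with hG
  -- left boundary
  have h0 : C 0 - c 0 = 2 * G 0 := by
    rw [div_eq_iff hgt] at hleft
    rw [hleft, hG, hS, hA]
    simp only
    push_cast
    field_simp
    ring
  -- right boundary
  have hJne : C J - c J = -(2 * G (J - 1)) := by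
    rw [div_eq_iff hgt] at hright
    have e1 : J - 1 + 1 = J := by omega
    have e2 : ((J - 1 : ℕ) : ℤ) = (J : ℤ) - 1 := by omega
    rw [hright, hG, hS, hA]
    simp only [e1, e2]
    push_cast
    field_simp
    simp only [hS]
    ring
  -- interior telescoping
  have hI : ∀ i, i + 1 < J → C (i + 1) - c (i + 1) = G (i + 1) - G i := by
    intro i hi
    have h := hint (i + 1) (by omega) hi
    rw [div_eq_iff hgt] at h
    have e1 : i + 1 - 1 = i := by omega
    have e2 : ((i + 1 : ℕ) : ℤ) = (i : ℤ) + 1 := by push_cast; ring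
    rw [e1, e2] at h
    rw [h, hG, hS, hA]
    simp only
    push_cast
    field_simp
    simp only [hS]
    ring
  -- sum of interior differences telescopes
  have hsum : ∑ j ∈ Finset.Ico 1 J, (C j - c j) = G (J - 1) - G 0 := by
    rw [Finset.sum_Ico_eq_sum_range]
    have : ∀ i ∈ Finset.range (J - 1), C (1 + i) - c (1 + i) = G (i + 1) - G i := by
      intro i hi
      rw [Finset.mem_range] at hi
      have : 1 + i = i + 1 := by omega
      rw [this]
      exact hI i (by omega)
    rw [Finset.sum_congr rfl this, Finset.sum_range_sub]
  have hsplit : (∑ j ∈ Finset.Ico 1 J, C j) - (∑ j ∈ Finset.Ico 1 J, c j)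
      = G (J - 1) - G 0 := by
    rw [← Finset.sum_sub_distrib]; exact hsum
  have key : C 0 / 2 + ∑ j ∈ Finset.Ico 1 J, C j + C J / 2
      = c 0 / 2 + ∑ j ∈ Finset.Ico 1 J, c j + c J / 2 := by
    have := hsplit
    linarith [h0, hJne]
  rw [key]
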